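/- Let n ≥ 1, let J be a symmetric n×n real matrix with zero diagonal, and let α, β > 0. If β ≥ ‖J + αI‖_∞, where ‖A‖_∞ = max_i ∑_j |A_{ij}| is the maximum-row-sum operator norm, then the DOCH map T satisfies ‖T(x)‖_∞ ≤ ‖x‖_∞^{1/3} for all x ∈ ℝⁿ, and consequently the DOCH iterates x^(k+1) = T(x^(k)) satisfy ‖x^(k)‖_∞ ≤ max(1, ‖x^(0)‖_∞) for all k ≥ 0; in particular the iterates are bounded for every α > 0. -/
import Mathlib


open Matrix

theorem stmt_15 (n : ℕ) (hn : 1 ≤ n) (J : Matrix (Fin n) (Fin n) ℝ)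
    (hJs : J.IsSymm) (hJd : ∀ i, J i i = 0)
    (α β : ℝ) (hα : 0 < α) (hβ : 0 < β)
    (hβbig : ∀ i, ∑ j, |(J + α • (1 : Matrix (Fin n) (Fin n) ℝ)) i j| ≤ β)
    (T : (Fin n → ℝ) → (Fin n → ℝ))
    (hT : ∀ y : Fin n → ℝ, ∀ i, (T y i) ^ 3 = β⁻¹ * ((J + α • 1) *ᵥ y) i)
    (x : ℕ → Fin n → ℝ) (hx : ∀ k, x (k + 1) = T (x k)) :
    (∀ v : Fin n → ℝ, (⨆ i, |T v i|) ≤ (⨆ i, |v i|) ^ ((1 : ℝ) / 3)) ∧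
      ∀ k : ℕ, (⨆ i, |x k i|) ≤ max 1 (⨆ i, |x 0 i|) := by
  haveI : Nonempty (Fin n) := ⟨⟨0, hn⟩⟩
  have hbdd : ∀ v : Fin n → ℝ, BddAbove (Set.range fun i => |v i|) :=
    fun v => Set.Finite.bddAbove (Set.finite_range _)
  have hle : ∀ (v : Fin n → ℝ) (i : Fin n), |v i| ≤ ⨆ i, |v i| :=
    fun v i => le_ciSup (hbdd v) i
  have hSnn : ∀ v : Fin n → ℝ, 0 ≤ ⨆ i, |v i| := by
    intro v
    exact le_trans (abs_nonneg _) (hle v (Classical.arbitrary _))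
  have key : ∀ v : Fin n → ℝ, (⨆ i, |T v i|) ≤ (⨆ i, |v i|) ^ ((1 : ℝ) / 3) := by
    intro v
    set S := ⨆ i, |v i| with hS
    have hS0 : 0 ≤ S := hSnn v
    apply ciSup_le
    intro i
    have hcube : |T v i| ^ 3 ≤ S := by
      have h1 : |T v i| ^ 3 = |β⁻¹ * ((J + α • 1) *ᵥ v) i| := by
        rw [← abs_pow, hT v i]
      rw [h1, abs_mul, abs_of_nonneg (le_of_lt (inv_pos.mpr hβ))]
      have h2 : |((J + α • 1) *ᵥ v) i| ≤ β * S := by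
        have : |((J + α • 1) *ᵥ v) i| ≤ ∑ j, |(J + α • (1 : Matrix (Fin n) (Fin n) ℝ)) i j| * S := by
          calc |((J + α • 1) *ᵥ v) i| = |∑ j, (J + α • (1 : Matrix (Fin n) (Fin n) ℝ)) i j * v j| := rfl
            _ ≤ ∑ j, |(J + α • (1 : Matrix (Fin n) (Fin n) ℝ)) i j * v j| := Finset.abs_sum_le_sum_abs _ _
            _ ≤ ∑ j, |(J + α • (1 : Matrix (Fin n) (Fin n) ℝ)) i j| * S := by
                apply Finset.sum_le_sum
                intro j _
                rw [abs_mul]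
                exact mul_le_mul_of_nonneg_left (hle v j) (abs_nonneg _)
        calc |((J + α • 1) *ᵥ v) i| ≤ ∑ j, |(J + α • (1 : Matrix (Fin n) (Fin n) ℝ)) i j| * S := this
          _ = (∑ j, |(J + α • (1 : Matrix (Fin n) (Fin n) ℝ)) i j|) * S := by rw [Finset.sum_mul]
          _ ≤ β * S := mul_le_mul_of_nonneg_right (hβbig i) hS0
      calc β⁻¹ * |((J + α • 1) *ᵥ v) i| ≤ β⁻¹ * (β * S) :=
            mul_le_mul_of_nonneg_left h2 (le_of_lt (inv_pos.mpr hβ))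
        _ = S := by field_simp
    have hrw : |T v i| = (|T v i| ^ 3) ^ ((1 : ℝ) / 3) := by
      rw [← Real.rpow_natCast (|T v i|) 3, ← Real.rpow_mul (abs_nonneg _)]
      norm_num
    rw [hrw]
    exact Real.rpow_le_rpow (by positivity) hcube (by norm_num)
  refine ⟨key, ?_⟩
  intro k
  induction k with
  | zero => exact le_max_right _ _
  | succ k ih =>
      set M := max 1 (⨆ i, |x 0 i|) with hM
      have hM1 : 1 ≤ M := le_max_left _ _
      have h1 : (⨆ i, |x (k + 1) i|) ≤ (⨆ i, |x k i|) ^ ((1 : ℝ) / 3) := by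
        rw [hx k]; exact key (x k)
      have h2 : (⨆ i, |x k i|) ^ ((1 : ℝ) / 3) ≤ M ^ ((1 : ℝ) / 3) :=
        Real.rpow_le_rpow (hSnn (x k)) ih (by norm_num)
      have h3 : M ^ ((1 : ℝ) / 3) ≤ M := by
        calc M ^ ((1 : ℝ) / 3) ≤ M ^ (1 : ℝ) :=
              Real.rpow_le_rpow_of_exponent_le hM1 (by norm_num)
          _ = M := Real.rpow_one M
      exact le_trans h1 (le_trans h2 h3)
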